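/- arXiv:2006.01565 — 2 statements merged into one kernel-verified Lean document; each statement's English description precedes it below -/
import Mathlib

section
/- Let 0 < r₀ < r₁, m = log(r₁/r₀) > log 3, and a ∈ ℝⁿ with |a| ≥ r₁. Set R₀ = r₀/(|a|(|a| − r₀)) and R₁ = r₁/(|a|(|a| + r₁)). Then R₁/R₀ ≥ (e^m − 1)/2 > 1, and hence log(R₁/R₀) ≥ m − log 3. -/
theorem stmt_5 (n : ℕ) (a : EuclideanSpace ℝ (Fin n)) (r₀ r₁ m : ℝ)
    (h0 : 0 < r₀) (h01 : r₀ < r₁) (ha : r₁ ≤ ‖a‖)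
    (hm : m = Real.log (r₁ / r₀)) (hm3 : Real.log 3 < m) :
    (Real.exp m - 1) / 2 ≤
        (r₁ / (‖a‖ * (‖a‖ + r₁))) / (r₀ / (‖a‖ * (‖a‖ - r₀))) ∧
    1 < (Real.exp m - 1) / 2 ∧
    m - Real.log 3 ≤
      Real.log ((r₁ / (‖a‖ * (‖a‖ + r₁))) / (r₀ / (‖a‖ * (‖a‖ - r₀)))) := by
  set t := ‖a‖ with htdef
  have h1 : 0 < r₁ := h0.trans h01
  have htp : 0 < t := lt_of_lt_of_le h1 ha
  have ht0 : 0 < t - r₀ := by linarith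
  have hexp : Real.exp m = r₁ / r₀ := by
    rw [hm, Real.exp_log (by positivity)]
  have h3 : 3 < r₁ / r₀ := by
    have := Real.exp_lt_exp.2 hm3
    rwa [Real.exp_log (by norm_num), hexp] at this
  have h3' : 3 * r₀ < r₁ := by
    rw [lt_div_iff₀ h0] at h3; linarith
  have heq : (r₁ / (t * (t + r₁))) / (r₀ / (t * (t - r₀)))
      = (r₁ * (t - r₀)) / (r₀ * (t + r₁)) := by
    field_simp
  have hmain : (Real.exp m - 1) / 2 ≤ (r₁ / (t * (t + r₁))) / (r₀ / (t * (t - r₀))) := by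
    rw [heq, hexp, div_le_div_iff₀ (by norm_num) (by positivity), div_sub' h0.ne',
      div_mul_eq_mul_div, div_le_iff₀ h0]
    nlinarith [mul_nonneg (mul_nonneg h0.le (by linarith : (0:ℝ) ≤ r₁ + r₀)) (by linarith : (0:ℝ) ≤ t - r₁)]
  refine ⟨hmain, ?_, ?_⟩
  · rw [hexp]
    rw [lt_div_iff₀ (by norm_num : (0:ℝ) < 2)]
    linarith
  · have hpos : (0:ℝ) < (r₁ / (t * (t + r₁))) / (r₀ / (t * (t - r₀))) := by
      rw [heq]; positivity
    have h2 : Real.exp m / 3 ≤ (r₁ / (t * (t + r₁))) / (r₀ / (t * (t - r₀))) := by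
      refine le_trans ?_ hmain
      rw [hexp]
      rw [div_le_div_iff₀ (by norm_num) (by norm_num)]
      linarith
    calc m - Real.log 3 = Real.log (Real.exp m / 3) := by
          rw [Real.log_div (Real.exp_ne_zero m) (by norm_num), Real.log_exp]
      _ ≤ _ := Real.log_le_log (by positivity) h2
end

section
/- Let ξ ∈ ℝⁿ with |ξ| = 1, and let R be a linear isometry of ℝⁿ with R(ξ) = eₙ, where eₙ = (0,…,0,1). Define Q(x) = 2(x − eₙ)/|x − eₙ|² + eₙ and P(x) = x − 2(x·eₙ)eₙ, and set M = P ∘ Q ∘ R. Then for every x in the open unit ball of ℝⁿ, |M(x)| = |x + ξ|/|x − ξ|. -/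
theorem stmt_9 (n : ℕ)
    (e ξ : EuclideanSpace ℝ (Fin (n + 1)))
    (he : e = EuclideanSpace.single (Fin.last n) (1:ℝ))
    (hξ : ‖ξ‖ = 1)
    (R : EuclideanSpace ℝ (Fin (n + 1)) ≃ₗᵢ[ℝ] EuclideanSpace ℝ (Fin (n + 1)))
    (hR : R ξ = e)
    (Q P : EuclideanSpace ℝ (Fin (n + 1)) → EuclideanSpace ℝ (Fin (n + 1)))
    (hQ : ∀ y, Q y = (2 / ‖y - e‖ ^ 2) • (y - e) + e)
    (hP : ∀ y, P y = y - (2 * (inner ℝ y e : ℝ)) • e)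
    (x : EuclideanSpace ℝ (Fin (n + 1))) (hx : ‖x‖ < 1) :
    ‖P (Q (R x))‖ = ‖x + ξ‖ / ‖x - ξ‖ := by
  have he1 : ‖e‖ = 1 := by rw [← hR, R.norm_map, hξ]
  set y := R x with hy_def
  have hyx : ‖y‖ = ‖x‖ := R.norm_map x
  have hsub : ‖y - e‖ = ‖x - ξ‖ := by rw [← hR, ← map_sub]; exact R.norm_map _
  have hadd : ‖y + e‖ = ‖x + ξ‖ := by rw [← hR, ← map_add]; exact R.norm_map _
  have hne : ‖y - e‖ ≠ 0 := by
    intro h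
    have hye : y = e := by
      have := norm_sub_eq_zero_iff.mp h
      exact this
    rw [hye, he1, eq_comm] at hyx
    rw [← hyx] at hx
    exact lt_irrefl _ hx
  have hnepos : (0:ℝ) < ‖y - e‖ := lt_of_le_of_ne (norm_nonneg _) (Ne.symm hne)
  -- P preserves norms
  have hPn : ∀ z : EuclideanSpace ℝ (Fin (n + 1)), ‖P z‖ = ‖z‖ := by
    intro z
    rw [hP]
    have hsq : ‖z - (2 * (inner ℝ z e : ℝ)) • e‖ ^ 2 = ‖z‖ ^ 2 := by
      rw [norm_sub_sq_real, real_inner_smul_right, norm_smul,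
        Real.norm_eq_abs, mul_pow, sq_abs, he1]
      ring
    calc ‖z - (2 * (inner ℝ z e : ℝ)) • e‖
        = Real.sqrt (‖z - (2 * (inner ℝ z e : ℝ)) • e‖ ^ 2) :=
          (Real.sqrt_sq (norm_nonneg _)).symm
      _ = Real.sqrt (‖z‖ ^ 2) := by rw [hsq]
      _ = ‖z‖ := Real.sqrt_sq (norm_nonneg _)
  rw [hPn]
  -- norm of Q y
  have hip : (inner ℝ e e : ℝ) = 1 := by
    rw [real_inner_self_eq_norm_sq, he1]; norm_num
  have hQsq : ‖Q y‖ ^ 2 = (‖y + e‖ / ‖y - e‖) ^ 2 := by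
    rw [hQ]
    have hs : (0:ℝ) < 2 / ‖y - e‖ ^ 2 := by positivity
    rw [norm_add_sq_real, real_inner_smul_left, inner_sub_left, hip,
      norm_smul, Real.norm_eq_abs, abs_of_pos hs, he1]
    have hd : ‖y - e‖ ^ 2 ≠ 0 := pow_ne_zero _ hne
    have h1 : ‖y - e‖ ^ 2 = ‖y‖ ^ 2 - 2 * (inner ℝ y e : ℝ) + 1 := by
      rw [norm_sub_sq_real, he1]; ring
    have h2 : ‖y + e‖ ^ 2 = ‖y‖ ^ 2 + 2 * (inner ℝ y e : ℝ) + 1 := by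
      rw [norm_add_sq_real, he1]; ring
    rw [div_pow, h2]
    generalize ht : (inner ℝ y e : ℝ) = t at h1 ⊢
    field_simp
    linear_combination h1
  have hq0 : 0 ≤ ‖y + e‖ / ‖y - e‖ := div_nonneg (norm_nonneg _) (norm_nonneg _)
  have : ‖Q y‖ = ‖y + e‖ / ‖y - e‖ := by
    calc ‖Q y‖ = Real.sqrt (‖Q y‖ ^ 2) := (Real.sqrt_sq (norm_nonneg _)).symm
      _ = Real.sqrt ((‖y + e‖ / ‖y - e‖) ^ 2) := by rw [hQsq]
      _ = ‖y + e‖ / ‖y - e‖ := Real.sqrt_sq hq0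
  rw [this, hadd, hsub]
end
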